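/- Let b > 0 and ε ∈ ℝ, and let g_μ(x) = (1/(2b))·exp(−|x−μ|/b) denote the Laplace density with location μ and scale b. Then exp(−|ε|/b) ≤ ∫_ℝ g_ε(x)²/g_0(x) dx ≤ exp(|ε|/b). -/

import Mathlib

open MeasureTheory Real Set

lemma integrable_exp_neg_abs_div (b : ℝ) (hb : 0 < b) :
    Integrable (fun x : ℝ ↦ Real.exp (-|x| / b)) := by
  have hbi : 0 < b⁻¹ := inv_pos.mpr hb
  have h1 : IntegrableOn (fun x : ℝ ↦ Real.exp (-|x| / b)) (Ioi 0) := by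
    refine (exp_neg_integrableOn_Ioi 0 hbi).congr_fun ?_ measurableSet_Ioi
    intro x hx
    show Real.exp (-b⁻¹ * x) = Real.exp (-|x| / b)
    rw [abs_of_pos (mem_Ioi.mp hx)]
    ring_nf
  have h2 : IntegrableOn (fun x : ℝ ↦ Real.exp (-|x| / b)) (Iic 0) := by
    rw [← Measure.map_neg_eq_self (volume : Measure ℝ)]
    have m : MeasurableEmbedding fun x : ℝ => -x := (Homeomorph.neg ℝ).measurableEmbedding
    rw [m.integrableOn_map_iff]
    simp_rw [Function.comp_def, abs_neg, neg_preimage, neg_Iic, neg_zero]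
    exact Iff.mpr integrableOn_Ici_iff_integrableOn_Ioi h1
  have h3 := h2.union h1
  rw [Iic_union_Ioi] at h3
  exact integrableOn_univ.mp h3

lemma integral_exp_neg_abs_div (b : ℝ) (hb : 0 < b) :
    ∫ x : ℝ, Real.exp (-|x| / b) = 2 * b := by
  have h : (fun x : ℝ ↦ Real.exp (-|x| / b)) = fun x ↦ (fun y ↦ Real.exp (-y / b)) |x| := by
    funext x; rfl
  rw [h, integral_comp_abs (f := fun y ↦ Real.exp (-y / b))]
  have h2 : ∀ x : ℝ, Real.exp (-x / b) = Real.exp (-(b⁻¹ * x)) := by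
    intro x; congr 1; field_simp
  simp_rw [h2]
  rw [integral_comp_mul_left_Ioi (fun x ↦ Real.exp (-x)) 0 (inv_pos.mpr hb)]
  simp [integral_exp_neg_Ioi, smul_eq_mul, integral_exp_Iic_zero]

/-- Chi-square affinity between two Laplace densities with the same scale `b` and
locations `ε` and `0` is bounded between `exp(-|ε|/b)` and `exp(|ε|/b)`. -/
theorem laplace_chi_sq_affinity_bounds (b ε : ℝ) (hb : 0 < b)
    (g : ℝ → ℝ → ℝ)
    (hg : ∀ μ x, g μ x = (1 / (2 * b)) * Real.exp (-|x - μ| / b)) :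
    Real.exp (-|ε| / b) ≤ ∫ x, (g ε x) ^ 2 / g 0 x ∧
      ∫ x, (g ε x) ^ 2 / g 0 x ≤ Real.exp (|ε| / b) := by
  -- integrability and integral of the Laplace density with location ε
  have hge : Integrable (fun x ↦ g ε x) := by
    have h0 : Integrable (fun x : ℝ ↦ Real.exp (-|x - ε| / b)) := by
      simpa using (integrable_exp_neg_abs_div b hb).comp_sub_right ε
    refine (h0.const_mul (1 / (2 * b))).congr ?_
    filter_upwards with x
    rw [hg]
  have hint_ge : ∫ x, g ε x = 1 := by
    have h1 : ∫ x, g ε x = (1 / (2 * b)) * ∫ x : ℝ, Real.exp (-|x - ε| / b) := by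
      simp_rw [hg]
      rw [integral_const_mul]
    have h2 : ∫ x : ℝ, Real.exp (-|x - ε| / b) = 2 * b := by
      rw [integral_sub_right_eq_self (fun x ↦ Real.exp (-|x| / b)) ε]
      exact integral_exp_neg_abs_div b hb
    rw [h1, h2]
    field_simp
  -- pointwise identity
  have key : ∀ x, (g ε x) ^ 2 / g 0 x = Real.exp ((|x| - |x - ε|) / b) * g ε x := by
    intro x
    simp only [hg]
    rw [sub_zero, div_eq_iff (by positivity)]
    simp only [mul_pow, sq, mul_comm, mul_assoc, mul_left_comm, ← Real.exp_add]
    congr 2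
    field_simp
    ring
  have hgpos : ∀ x, 0 < g ε x := by
    intro x; rw [hg]; positivity
  have hg0pos : ∀ x, 0 < g 0 x := by
    intro x; rw [hg]; positivity
  -- pointwise bounds
  have hub : ∀ x, (g ε x) ^ 2 / g 0 x ≤ Real.exp (|ε| / b) * g ε x := by
    intro x
    rw [key x]
    refine mul_le_mul_of_nonneg_right ?_ (hgpos x).le
    apply Real.exp_le_exp.mpr
    gcongr
    calc |x| - |x - ε| ≤ |x - (x - ε)| := abs_sub_abs_le_abs_sub _ _
      _ = |ε| := by rw [show x - (x - ε) = ε by ring]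
  have hlb : ∀ x, Real.exp (-|ε| / b) * g ε x ≤ (g ε x) ^ 2 / g 0 x := by
    intro x
    rw [key x]
    refine mul_le_mul_of_nonneg_right ?_ (hgpos x).le
    apply Real.exp_le_exp.mpr
    gcongr
    have h := abs_sub_abs_le_abs_sub (x - ε) x
    rw [show x - ε - x = -ε by ring, abs_neg] at h
    linarith
  -- integrability of the integrand
  have hf : Integrable (fun x ↦ (g ε x) ^ 2 / g 0 x) := by
    refine (hge.const_mul (Real.exp (|ε| / b))).mono' ?_ ?_
    · have hc : Continuous fun x ↦ Real.exp ((|x| - |x - ε|) / b) *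
          ((1 / (2 * b)) * Real.exp (-|x - ε| / b)) := by fun_prop
      refine (hc.aestronglyMeasurable).congr ?_
      filter_upwards with x
      rw [← hg, ← key]
    · filter_upwards with x
      rw [Real.norm_eq_abs,
        abs_of_nonneg (div_nonneg (sq_nonneg _) (hg0pos x).le)]
      exact hub x
  constructor
  · calc Real.exp (-|ε| / b) = Real.exp (-|ε| / b) * ∫ x, g ε x := by rw [hint_ge, mul_one]
      _ = ∫ x, Real.exp (-|ε| / b) * g ε x := (integral_const_mul _ _).symm
      _ ≤ ∫ x, (g ε x) ^ 2 / g 0 x := integral_mono (hge.const_mul _) hf (fun x ↦ hlb x)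
  · calc ∫ x, (g ε x) ^ 2 / g 0 x ≤ ∫ x, Real.exp (|ε| / b) * g ε x :=
        integral_mono hf (hge.const_mul _) (fun x ↦ hub x)
      _ = Real.exp (|ε| / b) * ∫ x, g ε x := integral_const_mul _ _
      _ = Real.exp (|ε| / b) := by rw [hint_ge, mul_one]
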